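/- Assume 0 < d_* ≤ d^* < ∞. Then the form t_{X,β} is lower semibounded (i.e., there exists C ≥ 0 with t_{X,β}[f] ≥ −C ∫₀^∞|f|² dx for all f in its domain) if and only if sup_k (1/β_k)^− < ∞. -/

import Mathlib

open MeasureTheory Set Filter

noncomputable section

set_option linter.unnecessarySimpa false

/-- Cauchy–Schwarz: `(∫ g)² ≤ |s| ∫ g²` on an interval. -/
lemma cs_lemma (a t : ℝ) (hat : a ≤ t) (g : ℝ → ℝ)
    (hg : IntegrableOn g (Ioc a t)) (hg2 : IntegrableOn (fun s => g s ^ 2) (Ioc a t)) :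
    (∫ s in Ioc a t, g s) ^ 2 ≤ (t - a) * ∫ s in Ioc a t, g s ^ 2 := by
  rcases eq_or_lt_of_le hat with rfl | hlt
  · simp
  set d := t - a with hd
  have hd0 : 0 < d := by simp [hd]; linarith
  set c := (∫ s in Ioc a t, g s) / d with hc
  have hmeas : (volume (Ioc a t)).toReal = d := by
    rw [Real.volume_Ioc, ENNReal.toReal_ofReal (by linarith)]
  have hnn : 0 ≤ ∫ s in Ioc a t, (g s - c) ^ 2 :=
    setIntegral_nonneg measurableSet_Ioc (fun s _ => sq_nonneg _)
  have hInt1 : Integrable (fun s => g s ^ 2 - 2 * c * g s) (volume.restrict (Ioc a t)) :=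
    hg2.sub (hg.const_mul (2 * c))
  have hexp : ∫ s in Ioc a t, (g s - c) ^ 2
      = (∫ s in Ioc a t, g s ^ 2) - 2 * c * (∫ s in Ioc a t, g s) + c ^ 2 * d := by
    have h1 : ∀ s, (g s - c) ^ 2 = (g s ^ 2 - 2 * c * g s) + c ^ 2 := by intro s; ring
    simp_rw [h1]
    rw [integral_add hInt1 (integrableOn_const (by simp [Real.volume_Ioc]))]
    rw [integral_sub hg2 (hg.const_mul (2 * c))]
    rw [integral_const_mul, setIntegral_const, measureReal_def, hmeas, smul_eq_mul]
    ring
  rw [hexp] at hnn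
  set I := ∫ s in Ioc a t, g s
  set J := ∫ s in Ioc a t, g s ^ 2
  have h3 : I ^ 2 / d ≤ J := by
    have : 2 * c * I = 2 * (I ^ 2 / d) := by rw [hc]; field_simp
    have h4 : c ^ 2 * d = I ^ 2 / d := by rw [hc]; field_simp
    rw [this, h4] at hnn
    linarith
  calc I ^ 2 = I ^ 2 / d * d := by field_simp
  _ ≤ J * d := mul_le_mul_of_nonneg_right h3 hd0.le
  _ = d * J := mul_comm _ _

lemma avg_bound (α h v K : ℝ) (f : ℝ → ℝ) (hh : 0 < h)
    (hfint : IntegrableOn (fun t => f t ^ 2) (Ioo α (α + h)))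
    (hpt : ∀ t ∈ Ioo α (α + h), v ^ 2 ≤ 2 * f t ^ 2 + 2 * h * K) :
    v ^ 2 ≤ (2 / h) * (∫ t in Ioo α (α + h), f t ^ 2) + 2 * h * K := by
  set W := ∫ t in Ioo α (α + h), f t ^ 2 with hW
  have hm : (volume (Ioo α (α + h))).toReal = h := by
    rw [Real.volume_Ioo]
    simp [ENNReal.toReal_ofReal hh.le]
  have hfin : volume (Ioo α (α + h)) ≠ ⊤ := by
    rw [Real.volume_Ioo]; exact ENNReal.ofReal_ne_top
  have h1 : h * v ^ 2 = ∫ _ in Ioo α (α + h), v ^ 2 := by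
    rw [setIntegral_const, measureReal_def, hm, smul_eq_mul]
  have h2 : (∫ _ in Ioo α (α + h), v ^ 2) ≤ ∫ t in Ioo α (α + h), (2 * f t ^ 2 + 2 * h * K) := by
    refine setIntegral_mono_on (integrableOn_const hfin)
      ((hfint.const_mul 2).add (integrableOn_const hfin))
      measurableSet_Ioo hpt
  have h3 : ∫ t in Ioo α (α + h), (2 * f t ^ 2 + 2 * h * K) = 2 * W + 2 * h * K * h := by
    rw [integral_add (hfint.const_mul 2) (integrableOn_const hfin)]
    rw [integral_const_mul, setIntegral_const, measureReal_def, hm, smul_eq_mul, ← hW]; ring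
  have h4 : h * v ^ 2 ≤ 2 * W + 2 * h * K * h := by rw [h1]; rw [h3] at h2; exact h2
  have h5 : v ^ 2 ≤ (2 * W + 2 * h * K * h) / h := by
    rw [le_div_iff₀ hh]; linarith
  have h6 : (2 * W + 2 * h * K * h) / h = 2 / h * W + 2 * h * K := by field_simp
  linarith

lemma trace_fr (a b h fr : ℝ) (f f' : ℝ → ℝ) (hh : 0 < h) (hab : a + h ≤ b)
    (hint : IntegrableOn f' (Ioc a b)) (hsq : IntegrableOn (fun t => f' t ^ 2) (Ioc a b))
    (hfsq : IntegrableOn (fun t => f t ^ 2) (Ioc a b))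
    (hftc : ∀ t ∈ Ioo a b, f t = fr + ∫ s in Ioc a t, f' s) :
    fr ^ 2 ≤ (2 / h) * (∫ t in Ioc a b, f t ^ 2) + 2 * h * (∫ t in Ioc a b, f' t ^ 2) := by
  set K := ∫ t in Ioc a b, f' t ^ 2 with hKdef
  have hK : 0 ≤ K := setIntegral_nonneg measurableSet_Ioc (fun t _ => sq_nonneg _)
  have hsub : Ioo a (a + h) ⊆ Ioc a b := fun t ht => ⟨ht.1, le_of_lt (lt_of_lt_of_le ht.2 hab)⟩
  have hpt : ∀ t ∈ Ioo a (a + h), fr ^ 2 ≤ 2 * f t ^ 2 + 2 * h * K := by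
    intro t ht
    have htb : t ∈ Ioo a b := ⟨ht.1, lt_of_lt_of_le ht.2 hab⟩
    have hta : a ≤ t := ht.1.le
    have htb' : t ≤ b := htb.2.le
    set I := ∫ s in Ioc a t, f' s with hI
    have hfr : fr = f t - I := by rw [hftc t htb]; ring
    have hcs : I ^ 2 ≤ (t - a) * ∫ s in Ioc a t, f' s ^ 2 :=
      cs_lemma a t hta f' (hint.mono_set (Ioc_subset_Ioc_right htb'))
        (hsq.mono_set (Ioc_subset_Ioc_right htb'))
    have hmono : (∫ s in Ioc a t, f' s ^ 2) ≤ K :=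
      setIntegral_mono_set hsq (Eventually.of_forall (fun s => sq_nonneg _))
        ((Ioc_subset_Ioc_right htb').eventuallyLE)
    have hnn : 0 ≤ ∫ s in Ioc a t, f' s ^ 2 :=
      setIntegral_nonneg measurableSet_Ioc (fun s _ => sq_nonneg _)
    have hIK : I ^ 2 ≤ h * K := by
      calc I ^ 2 ≤ (t - a) * ∫ s in Ioc a t, f' s ^ 2 := hcs
      _ ≤ h * K := by
          apply mul_le_mul (by linarith [ht.2]) hmono hnn hh.le
    rw [hfr]; nlinarith [sq_nonneg (f t + I), hIK]
  have := avg_bound a h fr K f hh (hfsq.mono_set hsub) hpt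
  have hle : (∫ t in Ioo a (a + h), f t ^ 2) ≤ ∫ t in Ioc a b, f t ^ 2 :=
    setIntegral_mono_set hfsq (Eventually.of_forall (fun s => sq_nonneg _)) hsub.eventuallyLE
  have h2h : 0 ≤ 2 / h := by positivity
  nlinarith [mul_le_mul_of_nonneg_left hle h2h]

lemma trace_fl (a b h fr fl : ℝ) (f f' : ℝ → ℝ) (hh : 0 < h) (hab : a + h ≤ b)
    (hint : IntegrableOn f' (Ioc a b)) (hsq : IntegrableOn (fun t => f' t ^ 2) (Ioc a b))
    (hfsq : IntegrableOn (fun t => f t ^ 2) (Ioc a b))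
    (hftc : ∀ t ∈ Ioo a b, f t = fr + ∫ s in Ioc a t, f' s)
    (hfl : fl = fr + ∫ s in Ioc a b, f' s) :
    fl ^ 2 ≤ (2 / h) * (∫ t in Ioc a b, f t ^ 2) + 2 * h * (∫ t in Ioc a b, f' t ^ 2) := by
  set K := ∫ t in Ioc a b, f' t ^ 2 with hKdef
  have hK : 0 ≤ K := setIntegral_nonneg measurableSet_Ioc (fun t _ => sq_nonneg _)
  have hba : b - h ≥ a := by linarith
  have hsub : Ioo (b - h) b ⊆ Ioc a b := fun t ht => ⟨lt_of_le_of_lt hba ht.1, ht.2.le⟩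
  have hpt : ∀ t ∈ Ioo (b - h) (b - h + h), fl ^ 2 ≤ 2 * f t ^ 2 + 2 * h * K := by
    intro t ht
    rw [sub_add_cancel] at ht
    have htb : t ∈ Ioo a b := ⟨lt_of_le_of_lt hba ht.1, ht.2⟩
    have hta : a ≤ t := htb.1.le
    have htb' : t ≤ b := htb.2.le
    set I := ∫ s in Ioc t b, f' s with hI
    have hsplit : (∫ s in Ioc a b, f' s) = (∫ s in Ioc a t, f' s) + I := by
      rw [← Ioc_union_Ioc_eq_Ioc hta htb', setIntegral_union (Ioc_disjoint_Ioc_of_le le_rfl)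
        measurableSet_Ioc (hint.mono_set (Ioc_subset_Ioc_right htb'))
        (hint.mono_set (Ioc_subset_Ioc_left hta))]
    have hfl2 : fl = f t + I := by rw [hfl, hftc t htb, hsplit]; ring
    have hcs : I ^ 2 ≤ (b - t) * ∫ s in Ioc t b, f' s ^ 2 :=
      cs_lemma t b htb' f' (hint.mono_set (Ioc_subset_Ioc_left hta))
        (hsq.mono_set (Ioc_subset_Ioc_left hta))
    have hmono : (∫ s in Ioc t b, f' s ^ 2) ≤ K :=
      setIntegral_mono_set hsq (Eventually.of_forall (fun s => sq_nonneg _))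
        ((Ioc_subset_Ioc_left hta).eventuallyLE)
    have hnn : 0 ≤ ∫ s in Ioc t b, f' s ^ 2 :=
      setIntegral_nonneg measurableSet_Ioc (fun s _ => sq_nonneg _)
    have hIK : I ^ 2 ≤ h * K := by
      calc I ^ 2 ≤ (b - t) * ∫ s in Ioc t b, f' s ^ 2 := hcs
      _ ≤ h * K := mul_le_mul (by linarith [ht.1]) hmono hnn hh.le
    rw [hfl2]; nlinarith [sq_nonneg (f t - I), hIK]
  have hsub' : Ioo (b - h) (b - h + h) ⊆ Ioc a b := by rw [sub_add_cancel]; exact hsub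
  have := avg_bound (b - h) h fl K f hh (hfsq.mono_set hsub') hpt
  have hle : (∫ t in Ioo (b - h) (b - h + h), f t ^ 2) ≤ ∫ t in Ioc a b, f t ^ 2 :=
    setIntegral_mono_set hfsq (Eventually.of_forall (fun s => sq_nonneg _)) hsub'.eventuallyLE
  have h2h : 0 ≤ 2 / h := by positivity
  nlinarith [mul_le_mul_of_nonneg_left hle h2h]

lemma sum_range_integral_le (x : ℕ → ℝ) (hx0 : x 0 = 0) (hmono : StrictMono x)
    (g : ℝ → ℝ) (hg : IntegrableOn g (Ioi 0)) (hg0 : ∀ t, 0 ≤ g t) (N : ℕ) :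
    ∑ k ∈ Finset.range N, ∫ t in Ioc (x k) (x (k + 1)), g t ≤ ∫ t in Ioi 0, g t := by
  have hxk : ∀ k, 0 ≤ x k := fun k => hx0 ▸ hmono.monotone (Nat.zero_le k)
  have hsubN : ∀ N : ℕ, Ioc (x 0) (x N) ⊆ Ioi (0:ℝ) := by
    intro N t ht; exact lt_of_le_of_lt (hxk 0) ht.1
  have key : ∀ N : ℕ, ∑ k ∈ Finset.range N, (∫ t in Ioc (x k) (x (k + 1)), g t)
      = ∫ t in Ioc (x 0) (x N), g t := by
    intro N
    induction N with
    | zero => simp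
    | succ n ih =>
      rw [Finset.sum_range_succ, ih]
      rw [← setIntegral_union (Ioc_disjoint_Ioc_of_le le_rfl) measurableSet_Ioc
        (hg.mono_set ((hsubN n)))
        (hg.mono_set (fun t ht => lt_of_le_of_lt (hxk n) ht.1))]
      rw [Ioc_union_Ioc_eq_Ioc (hmono.monotone (Nat.zero_le n)) (hmono.monotone (Nat.le_succ n))]
  rw [key N]
  exact setIntegral_mono_set hg (Eventually.of_forall (fun s => hg0 s)) (hsubN N).eventuallyLE



/-- A function that is *piecewise `H¹`* with respect to the partition points
`x 0 < x 1 < x 2 < ⋯` of `[0,∞)`: on each interval `Δ_{k+1} = [x k, x (k+1)]` it is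
absolutely continuous with derivative `f' ∈ L²`, encoded via the fundamental
theorem of calculus; `fr k = f(x k +)` and `fl (k+1) = f(x (k+1) −)` are the
one-sided limits at the nodes. -/
structure PW1 (x : ℕ → ℝ) where
  f : ℝ → ℝ
  f' : ℝ → ℝ
  fr : ℕ → ℝ
  fl : ℕ → ℝ
  int_d : ∀ k, IntegrableOn f' (Icc (x k) (x (k + 1))) volume
  sq_d : ∀ k, IntegrableOn (fun t => f' t ^ 2) (Icc (x k) (x (k + 1))) volume
  ftc : ∀ k, ∀ t ∈ Ioo (x k) (x (k + 1)), f t = fr k + ∫ s in Ioc (x k) t, f' s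
  fl_eq : ∀ k, fl (k + 1) = fr k + ∫ s in Ioc (x k) (x (k + 1)), f' s

/-- The jump `f(x_{k+1}+) − f(x_{k+1}−)` of a piecewise `H¹` function at the
interior node `x (k+1)` (the paper's node `x_{k+1}`). -/
def PW1.jump {x : ℕ → ℝ} (F : PW1 x) (k : ℕ) : ℝ := F.fr (k + 1) - F.fl (k + 1)

/-- Membership in the domain of the form `t_{X,β,q}`: `f ∈ L²(0,∞)`,
`∫₀^∞ |f'|² < ∞`, `∫₀^∞ |q| |f|² < ∞` and `Σ_k |f(x_k+) − f(x_k−)|²/|β_k| < ∞`. -/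
def MemDom (x : ℕ → ℝ) (q : ℝ → ℝ) (β : ℕ → ℝ) (F : PW1 x) : Prop :=
  IntegrableOn (fun t => F.f t ^ 2) (Ioi 0) volume ∧
  IntegrableOn (fun t => F.f' t ^ 2) (Ioi 0) volume ∧
  IntegrableOn (fun t => |q t| * F.f t ^ 2) (Ioi 0) volume ∧
  Summable (fun k => F.jump k ^ 2 / |β (k + 1)|)

/-- The value of the quadratic form
`t_{X,β,q}[f] = ∫₀^∞ (|f'|² + q |f|²) dx + Σ_k |f(x_k+) − f(x_k−)|²/β_k`. -/
def formVal (x : ℕ → ℝ) (q : ℝ → ℝ) (β : ℕ → ℝ) (F : PW1 x) : ℝ :=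
  (∫ t in Ioi (0 : ℝ), (F.f' t ^ 2 + q t * F.f t ^ 2)) +
    ∑' k, F.jump k ^ 2 / β (k + 1)


/-- Forward: lower-semiboundedness implies uniform bound on `(1/β)⁻`. -/
lemma fwd_dir (x : ℕ → ℝ) (hx0 : x 0 = 0) (hmono : StrictMono x)
    (β : ℕ → ℝ) (ε D C : ℝ) (hε : 0 < ε) (hC : 0 ≤ C)
    (hd : ∀ k, ε ≤ x (k + 1) - x k ∧ x (k + 1) - x k ≤ D)
    (hbd : ∀ F : PW1 x, MemDom x (fun _ => 0) β F →
        formVal x (fun _ => 0) β F ≥ -C * ∫ t in Ioi (0 : ℝ), F.f t ^ 2)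
    (k : ℕ) : max 0 (-(β (k + 1))⁻¹) ≤ 1 / ε + C * D := by
  have hxk : ∀ j, 0 ≤ x j := fun j => hx0 ▸ hmono.monotone (Nat.zero_le j)
  set a := x k with ha
  set b := x (k + 1) with hb
  set d := b - a with hdd
  have hd0 : 0 < d := lt_of_lt_of_le hε (hd k).1
  have hdε : ε ≤ d := (hd k).1
  have hdD : d ≤ D := (hd k).2
  -- the test function
  set f : ℝ → ℝ := fun t => if a < t ∧ t ≤ b then (t - a) / d else 0 with hf
  set g' : ℝ → ℝ := fun t => if a < t ∧ t ≤ b then 1 / d else 0 with hg'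
  have hg'ind : g' = (Ioc a b).indicator (fun _ => 1 / d) := by
    funext t; simp [hg', Set.indicator_apply, mem_Ioc]
  have hg'sqind : (fun t => g' t ^ 2) = (Ioc a b).indicator (fun _ => (1 / d) ^ 2) := by
    funext t; simp only [hg', Set.indicator_apply, mem_Ioc]; split_ifs <;> simp
  have hfsqind : (fun t => f t ^ 2) = (Ioc a b).indicator (fun t => ((t - a) / d) ^ 2) := by
    funext t; simp only [hf, Set.indicator_apply, mem_Ioc]; split_ifs <;> simp
  have hvolfin : volume (Ioc a b) < ⊤ := by rw [Real.volume_Ioc]; exact ENNReal.ofReal_lt_top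
  have hg'int : Integrable g' volume := by
    rw [hg'ind]
    exact (integrable_indicator_iff measurableSet_Ioc).2 (integrableOn_const hvolfin.ne)
  have hg'sqint : Integrable (fun t => g' t ^ 2) volume := by
    rw [hg'sqind]
    exact (integrable_indicator_iff measurableSet_Ioc).2 (integrableOn_const hvolfin.ne)
  have hfsqint : Integrable (fun t => f t ^ 2) volume := by
    rw [hfsqind]
    refine (integrable_indicator_iff measurableSet_Ioc).2 ?_
    exact (Continuous.integrableOn_Ioc (by continuity))
  -- zero on intervals away from k
  have hzero_lt : ∀ j, j < k → ∀ s, s ≤ x (j + 1) → g' s = 0 := by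
    intro j hj s hs
    have : x (j + 1) ≤ a := hmono.monotone hj
    simp only [hg', if_neg]
    rw [if_neg]; push_neg; intro h; linarith
  have hzero_gt : ∀ j, k < j → ∀ s, x j < s → g' s = 0 := by
    intro j hj s hs
    have : b ≤ x j := hmono.monotone hj
    simp only [hg', if_neg]
    rw [if_neg]; push_neg; intro h; linarith
  -- build the PW1 structure
  refine ?_
  set F : PW1 x := {
    f := f, f' := g',
    fr := fun _ => 0,
    fl := fun j => if j = k + 1 then 1 else 0,
    int_d := fun j => hg'int.integrableOn,
    sq_d := fun j => hg'sqint.integrableOn,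
    ftc := by
      intro j t ht
      rcases lt_trichotomy j k with hj | hj | hj
      · have h1 : x (j + 1) ≤ a := hmono.monotone hj
        have hft : f t = 0 := by
          simp only [hf]; rw [if_neg]; push_neg; intro h; linarith [ht.2]
        have : ∀ s ∈ Ioc (x j) t, g' s = 0 := fun s hs =>
          hzero_lt j hj s (le_trans hs.2 ht.2.le)
        rw [hft, setIntegral_congr_fun measurableSet_Ioc this]
        simp
      · subst hj
        have hcond : a < t ∧ t ≤ b := ⟨ht.1, ht.2.le⟩
        have hft : f t = (t - a) / d := by simp only [hf]; rw [if_pos hcond]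
        have : ∀ s ∈ Ioc a t, g' s = (fun _ : ℝ => 1 / d) s := by
          intro s hs
          simp only [hg']; rw [if_pos ⟨hs.1, le_trans hs.2 ht.2.le⟩]
        rw [hft, setIntegral_congr_fun measurableSet_Ioc this, setIntegral_const, measureReal_def,
          Real.volume_Ioc, ENNReal.toReal_ofReal (by linarith [ht.1.le] : (0:ℝ) ≤ t - a),
          smul_eq_mul]
        field_simp
        ring
      · have h1 : b ≤ x j := hmono.monotone hj
        have hft : f t = 0 := by
          simp only [hf]; rw [if_neg]; push_neg; intro h; linarith [ht.1]
        have : ∀ s ∈ Ioc (x j) t, g' s = 0 := fun s hs => hzero_gt j hj s hs.1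
        rw [hft, setIntegral_congr_fun measurableSet_Ioc this]
        simp
    fl_eq := by
      intro j
      rcases lt_trichotomy j k with hj | hj | hj
      · have : ∀ s ∈ Ioc (x j) (x (j + 1)), g' s = 0 := fun s hs => hzero_lt j hj s hs.2
        rw [setIntegral_congr_fun measurableSet_Ioc this]
        simp [show j ≠ k from by omega]
      · subst hj
        have : ∀ s ∈ Ioc a b, g' s = (fun _ : ℝ => 1 / d) s := by
          intro s hs; simp only [hg']; rw [if_pos ⟨hs.1, hs.2⟩]
        rw [setIntegral_congr_fun measurableSet_Ioc this, setIntegral_const, measureReal_def,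
          Real.volume_Ioc, ENNReal.toReal_ofReal hd0.le, smul_eq_mul]
        simp only [if_pos rfl]
        field_simp
        simp
      · have : ∀ s ∈ Ioc (x j) (x (j + 1)), g' s = 0 := fun s hs => hzero_gt j hj s hs.1
        rw [setIntegral_congr_fun measurableSet_Ioc this]
        simp [show j ≠ k from by omega] } with hF
  have hjump : ∀ j, F.jump j = if j = k then -1 else 0 := by
    intro j
    simp only [PW1.jump, hF]
    by_cases hjk : j = k
    · subst hjk; simp
    · rw [if_neg (by omega), if_neg hjk]; ring
  have hmem : MemDom x (fun _ => 0) β F := by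
    refine ⟨hfsqint.integrableOn, hg'sqint.integrableOn, ?_, ?_⟩
    · simpa using (integrableOn_zero : IntegrableOn (fun _ => (0:ℝ)) (Ioi 0) volume)
    · apply summable_of_ne_finset_zero (s := {k})
      intro j hj
      simp only [Finset.mem_singleton] at hj
      rw [hjump j, if_neg hj]
      simp
  have hineq := hbd F hmem
  -- compute the pieces
  have htsum : ∑' j, F.jump j ^ 2 / β (j + 1) = 1 / β (k + 1) := by
    rw [tsum_eq_single k]
    · rw [hjump k, if_pos rfl]; norm_num
    · intro j hj; rw [hjump j, if_neg hj]; simp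
  have hIsub : Ioi (0:ℝ) ∩ Ioc a b = Ioc a b := by
    apply inter_eq_right.2
    intro t ht; exact lt_of_le_of_lt (hxk k) ht.1
  have hint1 : ∫ t in Ioi (0:ℝ), (F.f' t ^ 2 + (fun _ : ℝ => (0:ℝ)) t * F.f t ^ 2)
      = 1 / d := by
    have : ∀ t, F.f' t ^ 2 + (fun _ : ℝ => (0:ℝ)) t * F.f t ^ 2 = g' t ^ 2 := by
      intro t; simp [hF]
    simp_rw [this]
    rw [hg'sqind, setIntegral_indicator measurableSet_Ioc, hIsub, setIntegral_const, measureReal_def,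
      Real.volume_Ioc, ENNReal.toReal_ofReal hd0.le, smul_eq_mul]
    field_simp
  have hint2 : (∫ t in Ioi (0:ℝ), F.f t ^ 2) ≤ D := by
    have heq : ∫ t in Ioi (0:ℝ), F.f t ^ 2 = ∫ t in Ioc a b, ((t - a) / d) ^ 2 := by
      show (∫ t in Ioi (0:ℝ), f t ^ 2) = _
      rw [hfsqind, setIntegral_indicator measurableSet_Ioc, hIsub]
    rw [heq]
    calc ∫ t in Ioc a b, ((t - a) / d) ^ 2 ≤ ∫ _ in Ioc a b, (1:ℝ) := by
          apply setIntegral_mono_on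
          · exact (Continuous.integrableOn_Ioc (by continuity))
          · exact integrableOn_const hvolfin.ne
          · exact measurableSet_Ioc
          · intro t ht
            have h1 : 0 ≤ (t - a) / d := div_nonneg (by linarith [ht.1.le]) hd0.le
            have h2 : (t - a) / d ≤ 1 := by
              rw [div_le_one hd0]; simp only [hdd]; linarith [ht.2]
            nlinarith
      _ = d := by
          rw [setIntegral_const, measureReal_def, Real.volume_Ioc, ENNReal.toReal_ofReal hd0.le, smul_eq_mul,
            mul_one]
      _ ≤ D := hdD
  have hnn : (0:ℝ) ≤ ∫ t in Ioi (0:ℝ), F.f t ^ 2 :=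
    setIntegral_nonneg measurableSet_Ioi (fun t _ => sq_nonneg _)
  rw [formVal, htsum, hint1] at hineq
  have hCd : -C * ∫ t in Ioi (0:ℝ), F.f t ^ 2 ≥ -C * D := by
    have := mul_le_mul_of_nonneg_left hint2 hC
    linarith
  have hfinal : -(β (k + 1))⁻¹ ≤ 1 / ε + C * D := by
    have h1d : 1 / d ≤ 1 / ε := by
      apply one_div_le_one_div_of_le hε hdε
    have : 1 / β (k + 1) ≥ -C * D - 1 / d := by linarith
    have hβinv : (β (k + 1))⁻¹ = 1 / β (k + 1) := (one_div _).symm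
    rw [hβinv]; linarith
  have h1ε : (0:ℝ) ≤ 1 / ε := by positivity
  have hD0 : (0:ℝ) ≤ D := le_trans hd0.le hdD
  have hCD : (0:ℝ) ≤ C * D := mul_nonneg hC hD0
  exact max_le (by linarith) hfinal



lemma bwd_dir (x : ℕ → ℝ) (hx0 : x 0 = 0) (hmono : StrictMono x)
    (β : ℕ → ℝ) (ε M : ℝ) (hε : 0 < ε)
    (hd : ∀ k, ε ≤ x (k + 1) - x k)
    (hM : ∀ k, max 0 (-(β (k + 1))⁻¹) ≤ M) :
    ∃ C : ℝ, 0 ≤ C ∧ ∀ F : PW1 x, MemDom x (fun _ => 0) β F →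
        formVal x (fun _ => 0) β F ≥ -C * ∫ t in Ioi (0 : ℝ), F.f t ^ 2 := by
  have hxk : ∀ j, 0 ≤ x j := fun j => hx0 ▸ hmono.monotone (Nat.zero_le j)
  set M0 := max M 0 with hM0
  have hM00 : 0 ≤ M0 := le_max_right _ _
  have hβinv : ∀ k, -M0 ≤ (β (k + 1))⁻¹ := by
    intro k
    have h1 : -(β (k + 1))⁻¹ ≤ M := le_trans (le_max_right _ _) (hM k)
    have h2 : M ≤ M0 := le_max_left _ _
    linarith
  set h := min ε (1 / (8 * M0 + 1)) with hh_def
  have hh : 0 < h := lt_min hε (by positivity)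
  have hhε : h ≤ ε := min_le_left _ _
  have hMh : 8 * M0 * h ≤ 1 := by
    have h1 : h ≤ 1 / (8 * M0 + 1) := min_le_right _ _
    have h2 : (0:ℝ) < 8 * M0 + 1 := by positivity
    rw [le_div_iff₀ h2] at h1
    nlinarith
  refine ⟨8 * M0 / h, by positivity, ?_⟩
  intro F ⟨hf2, hf'2, _, hsumβ⟩
  set A := ∫ t in Ioi (0:ℝ), F.f t ^ 2 with hA
  set B := ∫ t in Ioi (0:ℝ), F.f' t ^ 2 with hB
  have hA0 : 0 ≤ A := setIntegral_nonneg measurableSet_Ioi (fun t _ => sq_nonneg _)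
  have hB0 : 0 ≤ B := setIntegral_nonneg measurableSet_Ioi (fun t _ => sq_nonneg _)
  set a : ℕ → ℝ := fun k => ∫ t in Ioc (x k) (x (k + 1)), F.f t ^ 2 with ha
  set b : ℕ → ℝ := fun k => ∫ t in Ioc (x k) (x (k + 1)), F.f' t ^ 2 with hb
  have hIocsub : ∀ k, Ioc (x k) (x (k + 1)) ⊆ Ioi (0:ℝ) := by
    intro k t ht; exact lt_of_le_of_lt (hxk k) ht.1
  have ha0 : ∀ k, 0 ≤ a k := fun k => setIntegral_nonneg measurableSet_Ioc (fun t _ => sq_nonneg _)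
  have hb0 : ∀ k, 0 ≤ b k := fun k => setIntegral_nonneg measurableSet_Ioc (fun t _ => sq_nonneg _)
  have hab' : ∀ k, x k + h ≤ x (k + 1) := by
    intro k; have := hd k; linarith
  have htrace_r : ∀ k, F.fr k ^ 2 ≤ (2 / h) * a k + 2 * h * b k := by
    intro k
    exact trace_fr (x k) (x (k + 1)) h (F.fr k) F.f F.f' hh (hab' k)
      ((F.int_d k).mono_set Ioc_subset_Icc_self)
      ((F.sq_d k).mono_set Ioc_subset_Icc_self)
      (hf2.mono_set (hIocsub k)) (F.ftc k)
  have htrace_l : ∀ k, F.fl (k + 1) ^ 2 ≤ (2 / h) * a k + 2 * h * b k := by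
    intro k
    exact trace_fl (x k) (x (k + 1)) h (F.fr k) (F.fl (k + 1)) F.f F.f' hh (hab' k)
      ((F.int_d k).mono_set Ioc_subset_Icc_self)
      ((F.sq_d k).mono_set Ioc_subset_Icc_self)
      (hf2.mono_set (hIocsub k)) (F.ftc k) (F.fl_eq k)
  have hjump_bd : ∀ k, F.jump k ^ 2 ≤
      ((4 / h) * a (k + 1) + (4 * h) * b (k + 1)) + ((4 / h) * a k + (4 * h) * b k) := by
    intro k
    have h1 := htrace_r (k + 1)
    have h2 := htrace_l k
    have h3 : F.jump k ^ 2 ≤ 2 * F.fr (k + 1) ^ 2 + 2 * F.fl (k + 1) ^ 2 := by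
      rw [PW1.jump]; nlinarith [sq_nonneg (F.fr (k + 1) + F.fl (k + 1))]
    have e : 2 * ((2 / h) * a (k + 1) + 2 * h * b (k + 1)) + 2 * ((2 / h) * a k + 2 * h * b k)
        = ((4 / h) * a (k + 1) + (4 * h) * b (k + 1)) + ((4 / h) * a k + (4 * h) * b k) := by
      ring
    linarith [h1, h2, h3, e]
  have hSA : ∀ N, ∑ k ∈ Finset.range N, a k ≤ A :=
    sum_range_integral_le x hx0 hmono _ hf2 (fun t => sq_nonneg _)
  have hSB : ∀ N, ∑ k ∈ Finset.range N, b k ≤ B :=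
    sum_range_integral_le x hx0 hmono _ hf'2 (fun t => sq_nonneg _)
  have hSA' : ∀ N, ∑ k ∈ Finset.range N, a (k + 1) ≤ A := by
    intro N
    have := hSA (N + 1)
    rw [Finset.sum_range_succ'] at this
    linarith [ha0 0]
  have hSB' : ∀ N, ∑ k ∈ Finset.range N, b (k + 1) ≤ B := by
    intro N
    have := hSB (N + 1)
    rw [Finset.sum_range_succ'] at this
    linarith [hb0 0]
  have hpsum : ∀ N, ∑ k ∈ Finset.range N, F.jump k ^ 2 ≤ (8 / h) * A + 8 * h * B := by
    intro N
    have step1 : ∑ k ∈ Finset.range N, F.jump k ^ 2 ≤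
        ∑ k ∈ Finset.range N, (((4 / h) * a (k + 1) + (4 * h) * b (k + 1)) +
          ((4 / h) * a k + (4 * h) * b k)) :=
      Finset.sum_le_sum (fun k _ => hjump_bd k)
    have step2 : ∑ k ∈ Finset.range N, (((4 / h) * a (k + 1) + (4 * h) * b (k + 1)) +
        ((4 / h) * a k + (4 * h) * b k)) =
        (4 / h) * (∑ k ∈ Finset.range N, a (k + 1)) + (4 * h) * (∑ k ∈ Finset.range N, b (k + 1)) +
        ((4 / h) * (∑ k ∈ Finset.range N, a k) + (4 * h) * (∑ k ∈ Finset.range N, b k)) := by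
      simp only [Finset.sum_add_distrib, Finset.mul_sum]
    have c1 := mul_le_mul_of_nonneg_left (hSA' N) (by positivity : (0:ℝ) ≤ 4 / h)
    have c2 := mul_le_mul_of_nonneg_left (hSB' N) (by positivity : (0:ℝ) ≤ 4 * h)
    have c3 := mul_le_mul_of_nonneg_left (hSA N) (by positivity : (0:ℝ) ≤ 4 / h)
    have c4 := mul_le_mul_of_nonneg_left (hSB N) (by positivity : (0:ℝ) ≤ 4 * h)
    have efin : (4 / h) * A + (4 * h) * B + ((4 / h) * A + (4 * h) * B)
        = (8 / h) * A + 8 * h * B := by ring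
    linarith [step1, step2.le, step2.ge]
  have hjnn : ∀ k, 0 ≤ F.jump k ^ 2 := fun k => sq_nonneg _
  have hjsummable : Summable (fun k => F.jump k ^ 2) :=
    summable_of_sum_range_le hjnn hpsum
  have hT : (∑' k, F.jump k ^ 2) ≤ (8 / h) * A + 8 * h * B :=
    Summable.tsum_le_of_sum_range_le hjsummable hpsum
  have hT0 : 0 ≤ ∑' k, F.jump k ^ 2 := tsum_nonneg hjnn
  -- summability of the signed series
  have hsum_signed : Summable (fun k => F.jump k ^ 2 / β (k + 1)) := by
    rw [← summable_abs_iff]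
    have : ∀ k, |F.jump k ^ 2 / β (k + 1)| = F.jump k ^ 2 / |β (k + 1)| := by
      intro k; rw [abs_div, abs_of_nonneg (sq_nonneg _)]
    simpa only [this] using hsumβ
  have hptwise : ∀ k, -M0 * F.jump k ^ 2 ≤ F.jump k ^ 2 / β (k + 1) := by
    intro k
    rw [div_eq_mul_inv]
    have := mul_le_mul_of_nonneg_left (hβinv k) (sq_nonneg (F.jump k))
    linarith
  have htsum_ge : (∑' k, F.jump k ^ 2 / β (k + 1)) ≥ -M0 * ∑' k, F.jump k ^ 2 := by
    have hs1 : Summable (fun k => -M0 * F.jump k ^ 2) := hjsummable.mul_left _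
    have := Summable.tsum_le_tsum hptwise hs1 hsum_signed
    rwa [tsum_mul_left] at this
  -- the first integral equals B
  have hint_eq : (∫ t in Ioi (0:ℝ), (F.f' t ^ 2 + (fun _ : ℝ => (0:ℝ)) t * F.f t ^ 2)) = B := by
    have : ∀ t, F.f' t ^ 2 + (fun _ : ℝ => (0:ℝ)) t * F.f t ^ 2 = F.f' t ^ 2 := by
      intro t; simp
    simp_rw [this]
    exact hB.symm
  rw [formVal, hint_eq]
  have key : -M0 * ∑' k, F.jump k ^ 2 ≥ -(8 * M0 / h) * A - B := by
    have := mul_le_mul_of_nonneg_left hT hM00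
    have e2 : M0 * ((8 / h) * A + 8 * h * B) = (8 * M0 / h) * A + (8 * M0 * h) * B := by
      ring
    have e3 : (8 * M0 * h) * B ≤ 1 * B := mul_le_mul_of_nonneg_right hMh hB0
    nlinarith
  have := htsum_ge
  linarith [key, htsum_ge]


/-- **Corollary 2.13** (Mikhailets): if `0 < d_* ≤ d^* < ∞`, then `t_{X,β}` is
lower semibounded iff `sup_k (1/β_k)⁻ < ∞`. -/
theorem stmt_8 (x : ℕ → ℝ) (hx0 : x 0 = 0) (hmono : StrictMono x)
    (hxtop : Tendsto x atTop atTop)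
    (β : ℕ → ℝ) (hβ : ∀ k, β (k + 1) ≠ 0)
    (ε D : ℝ) (hε : 0 < ε)
    (hd : ∀ k, ε ≤ x (k + 1) - x k ∧ x (k + 1) - x k ≤ D) :
    (∃ C : ℝ, 0 ≤ C ∧ ∀ F : PW1 x, MemDom x (fun _ => 0) β F →
        formVal x (fun _ => 0) β F ≥ -C * ∫ t in Ioi (0 : ℝ), F.f t ^ 2) ↔
      (∃ M : ℝ, ∀ k, max 0 (-(β (k + 1))⁻¹) ≤ M) := by
  constructor
  · rintro ⟨C, hC, hbd⟩
    exact ⟨1 / ε + C * D, fun k => fwd_dir x hx0 hmono β ε D C hε hC hd hbd k⟩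
  · rintro ⟨M, hM⟩
    exact bwd_dir x hx0 hmono β ε M hε (fun k => (hd k).1) hM

end
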